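/- arXiv:2404.05033 — 2 statements merged into one kernel-verified Lean document; each statement's English description precedes it below -/
import Mathlib

section
/- For any distinct i, j, k ∈ {1,2,3}, the subgroup of A generated by {mᵢ + eⱼ, mⱼ + eᵢ, mₖ} is a Lagrangian subgroup of (A, ω), and the subgroup generated by {m₁ + e₂ + e₃, m₂ + e₁ + e₃, m₃ + e₁ + e₂} is a Lagrangian subgroup of (A, ω); these are condensation groups of boundaries condensing composites of charges and fluxes. -/
/-- The group of topological excitations of three copies of the 3D toric code:
pairs (a, b) of electric/magnetic labels in `(ZMod 2)³`. -/
abbrev A : Type := (Fin 3 → ZMod 2) × (Fin 3 → ZMod 2)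

/-- The electric charge `eᵢ`. -/
def e (i : Fin 3) : A := (Pi.single i 1, 0)

/-- The magnetic flux `mᵢ`. -/
def m (i : Fin 3) : A := (0, Pi.single i 1)

/-- The mutual-statistics pairing `ω((a,b),(a',b')) = a·b' + a'·b`. -/
def ω (x y : A) : ZMod 2 :=
  (∑ t, x.1 t * y.2 t) + (∑ t, y.1 t * x.2 t)

/-- The action of the S-domain wall `s⁽²⁾ᵢⱼ` on excitations:
`(a, b) ↦ (a + bⱼ•δᵢ + bᵢ•δⱼ, b)`. -/
def φ (i j : Fin 3) (x : A) : A :=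
  (x.1 + x.2 j • (Pi.single i 1 : Fin 3 → ZMod 2) + x.2 i • (Pi.single j 1 : Fin 3 → ZMod 2), x.2)

/-- A subgroup `L` of `A` is Lagrangian if it equals its orthogonal complement
with respect to the pairing `ω`. -/
def IsLagrangian (L : AddSubgroup A) : Prop :=
  (L : Set A) = {x : A | ∀ l ∈ L, ω x l = 0}

lemma ω_comm (x y : A) : ω x y = ω y x := by simp [ω]; ring
lemma ω_add_left (x y z : A) : ω (x + y) z = ω x z + ω y z := by
  simp [ω, add_mul, mul_add, Finset.sum_add_distrib]; ring
lemma ω_zero_left (z : A) : ω 0 z = 0 := by simp [ω]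
lemma ω_neg_left (x z : A) : ω (-x) z = - ω x z := by
  simp [ω, neg_add]; ring

/-- orthogonal complement of a set -/
def orth (S : Set A) : AddSubgroup A where
  carrier := {x | ∀ l ∈ S, ω x l = 0}
  zero_mem' := fun l _ => ω_zero_left l
  add_mem' := fun hx hy l hl => by rw [ω_add_left, hx l hl, hy l hl, add_zero]
  neg_mem' := fun hx l hl => by rw [ω_neg_left, hx l hl, neg_zero]

lemma mem_orth_closure {S : Set A} {x : A} (h : ∀ s ∈ S, ω x s = 0) :
    ∀ l ∈ AddSubgroup.closure S, ω x l = 0 := by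
  intro l hl
  rw [ω_comm]
  exact AddSubgroup.closure_le (orth {x}) |>.mpr
    (fun s hs => by
      intro y hy; rw [Set.mem_singleton_iff] at hy; subst hy
      rw [ω_comm]; exact h s hs) hl x rfl

lemma lag_of (S : Set A) (horth : ∀ x ∈ S, ∀ y ∈ S, ω x y = 0)
    (hspan : ∀ x : A, (∀ s ∈ S, ω x s = 0) → x ∈ AddSubgroup.closure S) :
    IsLagrangian (AddSubgroup.closure S) := by
  ext x
  constructor
  · intro hx
    exact mem_orth_closure (fun s hs =>
      (AddSubgroup.closure_le (orth S)).mpr (fun y hy l hl => horth y hy l hl) hx s hs)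
  · intro hx
    exact hspan x (fun s hs => hx s (AddSubgroup.subset_closure hs))

lemma zsmul_mem' (L : AddSubgroup A) (c : ZMod 2) {x : A} (hx : x ∈ L) : c • x ∈ L := by
  rcases (show ∀ c : ZMod 2, c = 0 ∨ c = 1 by decide) c with h | h <;> subst h <;>
    simp [hx, L.zero_mem]

lemma fin3_cases (i j k : Fin 3) (hij : i ≠ j) (hjk : j ≠ k) (hik : i ≠ k) (t : Fin 3) :
    t = i ∨ t = j ∨ t = k := by revert i j k t; decide

theorem stmt_7 (i j k : Fin 3) (hij : i ≠ j) (hjk : j ≠ k) (hik : i ≠ k) :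
    IsLagrangian (AddSubgroup.closure {m i + e j, m j + e i, m k}) ∧
    IsLagrangian (AddSubgroup.closure
      {m 0 + e 1 + e 2, m 1 + e 0 + e 2, m 2 + e 0 + e 1}) := by
  have two : ∀ u v : ZMod 2, u + v = 0 → u = v := by decide
  constructor
  · apply lag_of
    · intro x hx y hy
      simp only [Set.mem_insert_iff, Set.mem_singleton_iff] at hx hy
      rcases hx with rfl | rfl | rfl <;> rcases hy with rfl | rfl | rfl <;>
        simp [ω, m, e, Pi.single_apply, add_mul, mul_add, Finset.sum_add_distrib,
          hij, hjk, hik, hij.symm, hjk.symm, hik.symm] <;> decide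
    · rintro ⟨a, b⟩ hx
      have h1 := hx (m i + e j) (by simp)
      have h2 := hx (m j + e i) (by simp)
      have h3 := hx (m k) (by simp)
      simp [ω, m, e, Pi.single_apply, add_mul, Finset.sum_add_distrib] at h1 h2 h3
      replace h1 := two _ _ h1
      replace h2 := two _ _ h2
      have hxeq : (a, b) = a i • (m j + e i) + a j • (m i + e j) + b k • m k := by
        have comp : ∀ t : Fin 3, t = i ∨ t = j ∨ t = k := fin3_cases i j k hij hjk hik
        refine Prod.ext ?_ ?_ <;> funext t <;> rcases comp t with rfl | rfl | rfl <;>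
          simp [m, e, Pi.single_apply, hij, hjk, hik, hij.symm, hjk.symm, hik.symm,
            h1, h2, h3, Prod.smul_fst, Prod.smul_snd]
      rw [hxeq]
      refine AddSubgroup.add_mem _ (AddSubgroup.add_mem _ ?_ ?_) ?_ <;>
        apply zsmul_mem' <;> apply AddSubgroup.subset_closure <;> simp
  · apply lag_of
    · intro x hx y hy
      simp only [Set.mem_insert_iff, Set.mem_singleton_iff] at hx hy
      rcases hx with rfl | rfl | rfl <;> rcases hy with rfl | rfl | rfl <;> decide
    · rintro ⟨a, b⟩ hx
      have h1 := hx (m 0 + e 1 + e 2) (by simp)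
      have h2 := hx (m 1 + e 0 + e 2) (by simp)
      have h3 := hx (m 2 + e 0 + e 1) (by simp)
      simp [ω, m, e, Pi.single_apply, add_mul, Finset.sum_add_distrib, Fin.sum_univ_three] at h1 h2 h3
      have hxeq : (a, b) = b 0 • (m 0 + e 1 + e 2) + b 1 • (m 1 + e 0 + e 2) + b 2 • (m 2 + e 0 + e 1) := by
        clear hx
        refine Prod.ext ?_ ?_ <;> funext t <;> fin_cases t <;>
          simp [m, e, Pi.single_apply, Fin.ext_iff] <;> revert a b <;> decide
      rw [hxeq]
      refine AddSubgroup.add_mem _ (AddSubgroup.add_mem _ ?_ ?_) ?_ <;>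
        apply zsmul_mem' <;> apply AddSubgroup.subset_closure <;> simp
end

section
/- For any distinct i, j, k ∈ {1,2,3}, letting L be the subgroup of A generated by {eᵢ + eⱼ, mᵢ + mⱼ, mₖ}: φᵢⱼ maps L onto L; φⱼₖ does not map L onto L; φᵢₖ does not map L onto L; but the composite φⱼₖ ∘ φᵢₖ maps L onto L. That is, on the fold|m-boundary (eᵢeⱼ, mᵢmⱼ, mₖ) the wall s⁽²⁾ᵢⱼ condenses, the walls s⁽²⁾ⱼₖ and s⁽²⁾ᵢₖ individually do not, yet their composite s⁽²⁾ⱼₖ s⁽²⁾ᵢₖ does condense. -/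
/- ### Auxiliary lemmas -/

private lemma hvw : ∀ v w : Fin 3 → ZMod 2, v + w + w = v := by
  intro v w; funext t
  simp only [Pi.add_apply]
  rw [add_assoc, CharTwo.add_self_eq_zero, add_zero]

private lemma two_smul_vec (v : Fin 3 → ZMod 2) : (2 : ℕ) • v = 0 := by
  rw [two_smul]
  funext t
  simp only [Pi.add_apply, Pi.zero_apply]
  exact CharTwo.add_self_eq_zero _

private lemma addselfA (x : A) : x + x = 0 := by
  refine Prod.ext ?_ ?_ <;>
    · funext t
      simp only [Prod.fst_add, Prod.snd_add, Pi.add_apply, Prod.fst_zero, Prod.snd_zero,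
        Pi.zero_apply]
      exact CharTwo.add_self_eq_zero _

private lemma negA (x : A) : -x = x := neg_eq_of_add_eq_zero_left (addselfA x)

private lemma φ_add (i j : Fin 3) (x y : A) : φ i j (x + y) = φ i j x + φ i j y := by
  simp only [φ, Prod.fst_add, Prod.snd_add, Pi.add_apply, add_smul, Prod.mk_add_mk,
    Prod.mk.injEq]
  refine ⟨by abel, by simp⟩

private lemma φ_invol (i j : Fin 3) (x : A) : φ i j (φ i j x) = x := by
  simp only [φ]
  refine Prod.ext ?_ rfl
  show x.1 + x.2 j • (Pi.single i 1 : Fin 3 → ZMod 2) + x.2 i • (Pi.single j 1 : Fin 3 → ZMod 2)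
      + x.2 j • (Pi.single i 1 : Fin 3 → ZMod 2) + x.2 i • (Pi.single j 1 : Fin 3 → ZMod 2) = x.1
  calc x.1 + x.2 j • (Pi.single i 1 : Fin 3 → ZMod 2) + x.2 i • (Pi.single j 1 : Fin 3 → ZMod 2)
        + x.2 j • (Pi.single i 1 : Fin 3 → ZMod 2) + x.2 i • (Pi.single j 1 : Fin 3 → ZMod 2)
      = x.1 + x.2 i • (Pi.single j 1 : Fin 3 → ZMod 2) + x.2 i • (Pi.single j 1 : Fin 3 → ZMod 2)
        + x.2 j • (Pi.single i 1 : Fin 3 → ZMod 2) + x.2 j • (Pi.single i 1 : Fin 3 → ZMod 2) := by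
          abel
    _ = x.1 := by rw [hvw, hvw]

private lemma φφ_invol (a b c d : Fin 3) (x : A) : φ a b (φ c d (φ a b (φ c d x))) = x := by
  simp only [φ]
  refine Prod.ext ?_ rfl
  show x.1 + x.2 d • (Pi.single c 1 : Fin 3 → ZMod 2) + x.2 c • (Pi.single d 1 : Fin 3 → ZMod 2)
      + x.2 b • (Pi.single a 1 : Fin 3 → ZMod 2) + x.2 a • (Pi.single b 1 : Fin 3 → ZMod 2)
      + x.2 d • (Pi.single c 1 : Fin 3 → ZMod 2) + x.2 c • (Pi.single d 1 : Fin 3 → ZMod 2)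
      + x.2 b • (Pi.single a 1 : Fin 3 → ZMod 2) + x.2 a • (Pi.single b 1 : Fin 3 → ZMod 2) = x.1
  calc x.1 + x.2 d • (Pi.single c 1 : Fin 3 → ZMod 2) + x.2 c • (Pi.single d 1 : Fin 3 → ZMod 2)
      + x.2 b • (Pi.single a 1 : Fin 3 → ZMod 2) + x.2 a • (Pi.single b 1 : Fin 3 → ZMod 2)
      + x.2 d • (Pi.single c 1 : Fin 3 → ZMod 2) + x.2 c • (Pi.single d 1 : Fin 3 → ZMod 2)
      + x.2 b • (Pi.single a 1 : Fin 3 → ZMod 2) + x.2 a • (Pi.single b 1 : Fin 3 → ZMod 2)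
      = x.1 + x.2 a • (Pi.single b 1 : Fin 3 → ZMod 2) + x.2 a • (Pi.single b 1 : Fin 3 → ZMod 2)
      + x.2 b • (Pi.single a 1 : Fin 3 → ZMod 2) + x.2 b • (Pi.single a 1 : Fin 3 → ZMod 2)
      + x.2 c • (Pi.single d 1 : Fin 3 → ZMod 2) + x.2 c • (Pi.single d 1 : Fin 3 → ZMod 2)
      + x.2 d • (Pi.single c 1 : Fin 3 → ZMod 2) + x.2 d • (Pi.single c 1 : Fin 3 → ZMod 2) := by
        abel
    _ = x.1 := by rw [hvw, hvw, hvw, hvw]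

/-- If an involutive additive map sends the generators into the closure, then it maps the
closure onto itself. -/
private lemma image_closure_eq (g : A → A) (gadd : ∀ x y, g (x + y) = g x + g y)
    (ginv : ∀ x, g (g x) = x) (S : Set A)
    (hgen : ∀ x ∈ S, g x ∈ AddSubgroup.closure S) :
    g '' ((AddSubgroup.closure S : AddSubgroup A) : Set A) =
      ((AddSubgroup.closure S : AddSubgroup A) : Set A) := by
  have g0 : g 0 = 0 := by
    have h := gadd 0 0
    rw [zero_add] at h
    exact left_eq_add.mp h
  have hsub : ∀ x ∈ AddSubgroup.closure S, g x ∈ AddSubgroup.closure S := by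
    intro x hx
    refine AddSubgroup.closure_induction (fun y hy => hgen y hy) ?_ ?_ ?_ hx
    · rw [g0]; exact zero_mem _
    · intro a b _ _ ha hb; rw [gadd]; exact add_mem ha hb
    · intro a _ ha; rw [negA]; exact ha
  apply Set.Subset.antisymm
  · rintro _ ⟨y, hy, rfl⟩; exact hsub y hy
  · intro x hx
    exact ⟨g x, hsub x hx, ginv x⟩

theorem stmt_12 (i j k : Fin 3) (hij : i ≠ j) (hjk : j ≠ k) (hik : i ≠ k) :
    φ i j '' ((AddSubgroup.closure {e i + e j, m i + m j, m k} : AddSubgroup A) : Set A) =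
      ((AddSubgroup.closure {e i + e j, m i + m j, m k} : AddSubgroup A) : Set A) ∧
    φ j k '' ((AddSubgroup.closure {e i + e j, m i + m j, m k} : AddSubgroup A) : Set A) ≠
      ((AddSubgroup.closure {e i + e j, m i + m j, m k} : AddSubgroup A) : Set A) ∧
    φ i k '' ((AddSubgroup.closure {e i + e j, m i + m j, m k} : AddSubgroup A) : Set A) ≠
      ((AddSubgroup.closure {e i + e j, m i + m j, m k} : AddSubgroup A) : Set A) ∧
    (φ j k ∘ φ i k) '' ((AddSubgroup.closure {e i + e j, m i + m j, m k} : AddSubgroup A) : Set A) =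
      ((AddSubgroup.closure {e i + e j, m i + m j, m k} : AddSubgroup A) : Set A) := by
  set S : Set A := {e i + e j, m i + m j, m k} with hS
  have hg1 : e i + e j ∈ S := Or.inl rfl
  have hg2 : m i + m j ∈ S := Or.inr (Or.inl rfl)
  have hg3 : m k ∈ S := Or.inr (Or.inr rfl)
  -- value computations
  have v1 : φ i j (e i + e j) = e i + e j := by
    simp [φ, e, Prod.ext_iff]
  have v2 : φ i j (m i + m j) = e i + e j + (m i + m j) := by
    simp [φ, e, m, Prod.ext_iff, Pi.single_eq_same, Pi.single_eq_of_ne hij.symm,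
      Pi.single_eq_of_ne hij]
  have v3 : φ i j (m k) = m k := by
    simp [φ, m, Prod.ext_iff, Pi.single_eq_of_ne hjk, Pi.single_eq_of_ne hik]
  have vjk : φ j k (m k) = e j + m k := by
    simp [φ, e, m, Prod.ext_iff, Pi.single_eq_same, Pi.single_eq_of_ne hjk]
  have vik : φ i k (m k) = e i + m k := by
    simp [φ, e, m, Prod.ext_iff, Pi.single_eq_same, Pi.single_eq_of_ne hik]
  have w1 : φ j k (φ i k (e i + e j)) = e i + e j := by
    simp [φ, e, Prod.ext_iff]
  have w2 : φ j k (φ i k (m i + m j)) = m i + m j := by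
    simp [φ, e, m, Prod.ext_iff, Pi.single_eq_same, Pi.single_eq_of_ne hik.symm,
      Pi.single_eq_of_ne hjk.symm, Pi.single_eq_of_ne hij, Pi.single_eq_of_ne hij.symm,
      Pi.single_eq_of_ne hjk, Pi.single_eq_of_ne hik]
    funext t
    simp only [Pi.add_apply, Pi.zero_apply]
    exact CharTwo.add_self_eq_zero _
  have w3 : φ j k (φ i k (m k)) = e i + e j + m k := by
    simp [φ, e, m, Prod.ext_iff, Pi.single_eq_same, Pi.single_eq_of_ne hik.symm,
      Pi.single_eq_of_ne hjk.symm, Pi.single_eq_of_ne hij, Pi.single_eq_of_ne hij.symm,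
      Pi.single_eq_of_ne hjk, Pi.single_eq_of_ne hik]
  -- the linear functional detecting non-membership
  have FL : ∀ x ∈ AddSubgroup.closure S, x.1 i + x.1 j = 0 := by
    intro x hx
    refine AddSubgroup.closure_induction ?_ ?_ ?_ ?_ hx
    · rintro y (rfl | rfl | rfl)
      · simp [e, Pi.single_eq_same, Pi.single_eq_of_ne hij, Pi.single_eq_of_ne hij.symm]
        decide
      · simp [m]
      · simp [m]
    · simp
    · intro a b _ _ ha hb
      simp only [Prod.fst_add, Pi.add_apply]
      calc a.1 i + b.1 i + (a.1 j + b.1 j) = (a.1 i + a.1 j) + (b.1 i + b.1 j) := by ring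
        _ = 0 := by rw [ha, hb, add_zero]
    · intro a _ ha; rw [negA]; exact ha
  have hmkL : m k ∈ AddSubgroup.closure S := AddSubgroup.subset_closure hg3
  refine ⟨?_, ?_, ?_, ?_⟩
  · refine image_closure_eq _ (φ_add i j) (φ_invol i j) S ?_
    rintro x (rfl | rfl | rfl)
    · rw [v1]; exact AddSubgroup.subset_closure hg1
    · rw [v2]
      exact add_mem (AddSubgroup.subset_closure hg1) (AddSubgroup.subset_closure hg2)
    · rw [v3]; exact hmkL
  · intro h
    have hmem : φ j k (m k) ∈ AddSubgroup.closure S := by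
      rw [← SetLike.mem_coe, ← h]
      exact ⟨m k, hmkL, rfl⟩
    rw [vjk] at hmem
    have := FL _ hmem
    simp [e, m, Pi.single_eq_same, Pi.single_eq_of_ne hij] at this
  · intro h
    have hmem : φ i k (m k) ∈ AddSubgroup.closure S := by
      rw [← SetLike.mem_coe, ← h]
      exact ⟨m k, hmkL, rfl⟩
    rw [vik] at hmem
    have := FL _ hmem
    simp [e, m, Pi.single_eq_same, Pi.single_eq_of_ne hij.symm] at this
  · refine image_closure_eq _ ?_ (fun x => φφ_invol j k i k x) S ?_
    · intro x y
      simp only [Function.comp_apply, φ_add]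
    · rintro x (rfl | rfl | rfl)
      · show φ j k (φ i k _) ∈ _
        rw [w1]; exact AddSubgroup.subset_closure hg1
      · show φ j k (φ i k _) ∈ _
        rw [w2]; exact AddSubgroup.subset_closure hg2
      · show φ j k (φ i k _) ∈ _
        rw [w3]
        exact add_mem (AddSubgroup.subset_closure hg1) hmkL
end
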